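/- Let G be a finite group and H a strongly closed subgroup of G. If H is subnormal in G, then H is normal in G. -/

import Mathlib

def StronglyClosed {G : Type*} [Group G] (H : Subgroup G) : Prop :=
  ∀ g : G, H.map (MulAut.conj g).toMonoidHom ⊓ Subgroup.normalizer (H : Set G) ≤ H

/-- `H` is subnormal in `G`: there is a chain `H = H₀ ⊴ H₁ ⊴ ⋯ ⊴ Hₙ = G`. -/
def Subnormal {G : Type*} [Group G] (H : Subgroup G) : Prop :=
  ∃ (n : ℕ) (c : Fin (n + 1) → Subgroup G),
    c 0 = H ∧ c (Fin.last n) = ⊤ ∧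
    ∀ i : Fin n, ∃ _ : c i.castSucc ≤ c i.succ,
      ((c i.castSucc).subgroupOf (c i.succ)).Normal

theorem stmt11 {G : Type*} [Group G] [Finite G] (H : Subgroup G)
    (hSC : StronglyClosed H) (hsub : Subnormal H) : H.Normal := by
  obtain ⟨n, c, hc0, hctop, hstep⟩ := hsub
  have key : ∀ j : Fin (n + 1), H ≤ c j ∧ c j ≤ Subgroup.normalizer (H : Set G) := by
    intro j
    induction j using Fin.induction with
    | zero => rw [hc0]; exact ⟨le_refl H, Subgroup.le_normalizer⟩
    | succ i ih =>
      obtain ⟨hle, hnorm⟩ := ih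
      obtain ⟨hik, hN⟩ := hstep i
      have claim : ∀ g ∈ c i.succ, ∀ h ∈ H, g * h * g⁻¹ ∈ H := by
        intro g hg h hh
        have hhK : h ∈ c i.castSucc := hle hh
        have hconjK : g * h * g⁻¹ ∈ c i.castSucc := by
          have hx : (⟨h, hik hhK⟩ : c i.succ) ∈ (c i.castSucc).subgroupOf (c i.succ) := hhK
          have := hN.conj_mem _ hx ⟨g, hg⟩
          simpa [Subgroup.mem_subgroupOf] using this
        refine hSC g ⟨?_, hnorm hconjK⟩
        exact ⟨h, hh, by simp⟩
      refine ⟨hle.trans hik, fun g hg => ?_⟩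
      rw [Subgroup.mem_normalizer_iff]
      intro h
      constructor
      · exact fun hh => claim g hg h hh
      · intro hh
        have := claim g⁻¹ ((c i.succ).inv_mem hg) _ hh
        simpa [mul_assoc] using this
  have htop : Subgroup.normalizer (H : Set G) = ⊤ := top_le_iff.mp (hctop ▸ (key (Fin.last n)).2)
  exact Subgroup.normalizer_eq_top_iff.mp htop
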